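/- arXiv:2103.16904 — 2 statements merged into one kernel-verified Lean document; each statement's English description precedes it below -/
import Mathlib

section
/- Let F be an algebraically closed field and let (f, g) be a pair of homogeneous polynomials of degree d ≥ 2 over F defining a separable simple morphism (f : g) : P^1 → P^1, with double point polynomial Δ. Then for every point ((a_0 : a_1), (b_0 : b_1)) of P^1(F) × P^1(F) with Δ(a_0, a_1, b_0, b_1) = 0, either the binary form Δ(a_0, a_1, Y_0, Y_1) in (Y_0, Y_1) has (b_0 : b_1) as a zero of multiplicity exactly 1, or the binary form Δ(X_0, X_1, b_0, b_1) in (X_0, X_1) has (a_0 : a_1) as a zero of multiplicity exactly 1; in particular the zero locus of Δ in P^1 × P^1 is a nonsingular curve. -/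
open MvPolynomial

noncomputable section

def wronskian2 (K : Type) [Field K] (f g : MvPolynomial (Fin 2) K) : MvPolynomial (Fin 2) K :=
  pderiv 0 f * pderiv 1 g - pderiv 1 f * pderiv 0 g

def linForm (K : Type) [Field K] (c d : K) : MvPolynomial (Fin 2) K :=
  C d * X 0 - C c * X 1

/-- Simplicity over an algebraically closed field `K` (so that `K̄ = K`). -/
def IsSimplePair' (K : Type) [Field K] (f g : MvPolynomial (Fin 2) K) : Prop :=
  ∀ a b : K, (a, b) ≠ (0, 0) →
    (∀ c d : K, (c, d) ≠ (0, 0) → ¬ (linForm K c d) ^ 3 ∣ (C b * f - C a * g)) ∧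
    (∀ c d c' d' : K, (c, d) ≠ (0, 0) → (c', d') ≠ (0, 0) →
      (linForm K c d) ^ 2 ∣ (C b * f - C a * g) →
      (linForm K c' d') ^ 2 ∣ (C b * f - C a * g) → c * d' = c' * d)

namespace DPAux

variable {F : Type} [Field F]

lemma deg_fin2 (m : Fin 2 →₀ ℕ) : m.degree = m 0 + m 1 := by
  rw [Finsupp.degree_apply]
  rw [Finset.sum_subset (Finset.subset_univ m.support)
    (fun i _ hi => Finsupp.notMem_support_iff.mp hi)]
  simp [Fin.sum_univ_two]

lemma X0_dvd_of_homog {p : MvPolynomial (Fin 2) F} {n : ℕ} (hp : p.IsHomogeneous n)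
    (h0 : eval ![(0:F),1] p = 0) : X (0 : Fin 2) ∣ p := by
  have hs : ∀ m ∈ p.support, m 0 ≠ 0 := by
    intro m hm hm0
    have hc : coeff m p ≠ 0 := mem_support_iff.mp hm
    have hdeg : m.degree = n := by
      by_contra hne
      exact hc (hp.coeff_eq_zero hne)
    have hm1 : m 1 = n := by rw [deg_fin2, hm0, zero_add] at hdeg; exact hdeg
    have hmeq : m = Finsupp.single 1 n := by
      ext i
      fin_cases i
      · simpa [Finsupp.single_apply] using hm0
      · simpa [Finsupp.single_apply] using hm1
    have heval : eval ![(0:F),1] p = coeff m p := by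
      rw [eval_eq']
      rw [Finset.sum_eq_single m]
      · rw [hmeq]
        simp [Fin.prod_univ_two, Finsupp.single_apply]
      · intro d hd hdm
        have hd0 : d 0 ≠ 0 := by
          intro hd0
          apply hdm
          have hdc : coeff d p ≠ 0 := mem_support_iff.mp hd
          have : d.degree = n := by
            by_contra hne; exact hdc (hp.coeff_eq_zero hne)
          rw [deg_fin2, hd0, zero_add] at this
          rw [hmeq]
          ext i
          fin_cases i
          · simpa [Finsupp.single_apply] using hd0
          · simpa [Finsupp.single_apply] using this
        rw [Fin.prod_univ_two]
        simp [zero_pow hd0]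
      · intro h; exact absurd hm h
    rw [h0] at heval
    exact hc heval.symm
  rw [p.as_sum]
  apply Finset.dvd_sum
  intro m hm
  exact X_dvd_monomial.mpr (Or.inr (hs m hm))

lemma isHomog_of_mul {p q : MvPolynomial (Fin 2) F} {m n : ℕ}
    (hp : p.IsHomogeneous m) (hp0 : p ≠ 0) (hpq : (p * q).IsHomogeneous (m + n)) :
    q.IsHomogeneous n := by
  have key : ∀ k, k ≠ n → homogeneousComponent k q = 0 := by
    intro k hk
    have h1 : homogeneousComponent (m + k) (p * q) = p * homogeneousComponent k q := by
      conv_lhs => rw [← sum_homogeneousComponent q]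
      rw [Finset.mul_sum, map_sum]
      rw [Finset.sum_eq_single k]
      · rw [homogeneousComponent_of_mem
          ((mem_homogeneousSubmodule _ _).mpr
            (hp.mul (homogeneousComponent_isHomogeneous k q)))]
        simp [add_comm]
      · intro i _ hik
        rw [homogeneousComponent_of_mem
          ((mem_homogeneousSubmodule _ _).mpr
            (hp.mul (homogeneousComponent_isHomogeneous i q)))]
        rw [if_neg]
        omega
      · intro hknot
        have : q.totalDegree < k := by
          simp only [Finset.mem_range, not_lt] at hknot
          omega
        rw [homogeneousComponent_eq_zero _ _ this, mul_zero, map_zero]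
    have h2 : homogeneousComponent (m + k) (p * q) = 0 := by
      rw [homogeneousComponent_of_mem ((mem_homogeneousSubmodule _ _).mpr hpq)]
      rw [if_neg (by omega)]
    rw [h2] at h1
    rcases mul_eq_zero.mp h1.symm with h | h
    · exact absurd h hp0
    · exact h
  have hq : q = homogeneousComponent n q := by
    conv_lhs => rw [← sum_homogeneousComponent q]
    by_cases hn : n ∈ Finset.range (q.totalDegree + 1)
    · rw [Finset.sum_eq_single_of_mem n hn]
      intro i _ hin; exact key i hin
    · have h1 : homogeneousComponent n q = 0 :=
        homogeneousComponent_eq_zero _ _ (by simp only [Finset.mem_range, not_lt] at hn; omega)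
      rw [h1, Finset.sum_eq_zero (fun i hi => key i (fun h => hn (h ▸ hi)))]
  rw [hq]
  exact homogeneousComponent_isHomogeneous n q

lemma linForm_isHomog (c d : F) : (linForm F c d).IsHomogeneous 1 :=
  (((isHomogeneous_X F 0).C_mul d).sub ((isHomogeneous_X F 1).C_mul c))

lemma eval_linForm (c d x y : F) : eval ![x, y] (linForm F c d) = d * x - c * y := by
  simp [linForm]

lemma linForm_ne_zero {c d : F} (h : (c, d) ≠ (0, 0)) : linForm F c d ≠ 0 := by
  intro h0
  apply h
  have h1 := congrArg (eval ![(1:F), 0]) h0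
  have h2 := congrArg (eval ![(0:F), 1]) h0
  rw [eval_linForm] at h1 h2
  simp at h1 h2
  simp [h1, h2]

lemma aeval_comp_2 {σ : Type} (w : σ → MvPolynomial (Fin 2) F)
    (v : Fin 2 → MvPolynomial σ F) (p : MvPolynomial (Fin 2) F) :
    aeval w (aeval v p) = aeval (fun i => aeval w (v i)) p := by
  rw [← comp_aeval_apply]

lemma aeval_C_pair (u v : F) (p : MvPolynomial (Fin 2) F) :
    aeval ![(C u : MvPolynomial (Fin 2) F), C v] p = C (eval ![u, v] p) := by
  have : (aeval ![(C u : MvPolynomial (Fin 2) F), C v] : MvPolynomial (Fin 2) F →ₐ[F] _)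
      = (Algebra.ofId F (MvPolynomial (Fin 2) F)).comp
          (aeval ![u, v] : MvPolynomial (Fin 2) F →ₐ[F] F) := by
    apply MvPolynomial.algHom_ext
    intro i
    fin_cases i
    · simp [Algebra.ofId_apply, algebraMap_eq]
    · simp [Algebra.ofId_apply, algebraMap_eq]
  rw [this, AlgHom.comp_apply, Algebra.ofId_apply, algebraMap_eq]
  congr 1

lemma root_dvd {h : MvPolynomial (Fin 2) F} {n : ℕ} (hh : h.IsHomogeneous n)
    {b₀ b₁ : F} (hb : (b₀, b₁) ≠ (0, 0)) (h0 : eval ![b₀, b₁] h = 0) :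
    linForm F b₀ b₁ ∣ h := by
  obtain ⟨α, γ, hdet⟩ : ∃ α γ : F, b₁ * α - b₀ * γ = 1 := by
    by_cases hb1 : b₁ = 0
    · have hb0 : b₀ ≠ 0 := by
        intro hb0; exact hb (by rw [hb0, hb1])
      exact ⟨0, -b₀⁻¹, by field_simp; ring⟩
    · exact ⟨b₁⁻¹, 0, by field_simp; ring⟩
  have hC : C b₁ * C α - C b₀ * C γ = (1 : MvPolynomial (Fin 2) F) := by
    rw [← C_mul, ← C_mul, ← C_sub, hdet, C_1]
  set u : MvPolynomial (Fin 2) F := C α * X 0 + C b₀ * X 1 with hu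
  set v : MvPolynomial (Fin 2) F := C γ * X 0 + C b₁ * X 1 with hv
  set u' : MvPolynomial (Fin 2) F := C b₁ * X 0 - C b₀ * X 1 with hu'
  set v' : MvPolynomial (Fin 2) F := -(C γ) * X 0 + C α * X 1 with hv'
  have hcomp : ∀ p : MvPolynomial (Fin 2) F, aeval ![u', v'] (aeval ![u, v] p) = p := by
    intro p
    rw [aeval_comp_2]
    have : (fun i => aeval ![u', v'] (![u, v] i)) = (X : Fin 2 → MvPolynomial (Fin 2) F) := by
      funext i
      fin_cases i
      · simp only [Fin.zero_eta, Matrix.cons_val_zero, hu, map_add, map_mul, aeval_C, aeval_X,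
          Matrix.cons_val_one, Matrix.head_cons, algebraMap_eq, hu', hv']
        linear_combination (X 0 : MvPolynomial (Fin 2) F) * hC
      · simp only [Fin.mk_one, Matrix.cons_val_one, Matrix.head_cons, hv, map_add, map_mul,
          aeval_C, aeval_X, Matrix.cons_val_zero, algebraMap_eq, hu', hv']
        linear_combination (X 1 : MvPolynomial (Fin 2) F) * hC
    rw [this, aeval_X_left_apply]
  have heL : aeval ![u, v] (linForm F b₀ b₁) = X 0 := by
    rw [linForm]
    simp only [map_sub, map_mul, aeval_C, aeval_X, Matrix.cons_val_zero, Matrix.cons_val_one,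
      Matrix.head_cons, algebraMap_eq]
    linear_combination (X 0 : MvPolynomial (Fin 2) F) * hC
  have hhomog : (aeval ![u, v] h).IsHomogeneous n := by
    have := hh.aeval ![u, v] (n := 1) ?_
    · rwa [one_mul] at this
    · intro i
      fin_cases i
      · exact ((isHomogeneous_X F 0).C_mul α).add ((isHomogeneous_X F 1).C_mul b₀)
      · exact ((isHomogeneous_X F 0).C_mul γ).add ((isHomogeneous_X F 1).C_mul b₁)
  have heval : eval ![(0:F), 1] (aeval ![u, v] h) = 0 := by
    have h1 : eval ![(0:F), 1] (aeval ![u, v] h) = eval (eval ![(0:F),1] ∘ ![u, v]) h := by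
      rw [aeval_def, algebraMap_eq, ← eval_assoc]
    have h2 : (eval ![(0:F),1] ∘ ![u, v]) = ![b₀, b₁] := by
      funext i
      fin_cases i
      · simp [hu]
      · simp [hv]
    rw [h1, h2, h0]
  obtain ⟨q, hq⟩ := X0_dvd_of_homog hhomog heval
  refine ⟨aeval ![u', v'] q, ?_⟩
  calc h = aeval ![u', v'] (aeval ![u, v] h) := (hcomp h).symm
    _ = aeval ![u', v'] (X 0 * q) := by rw [hq]
    _ = aeval ![u', v'] (X 0) * aeval ![u', v'] q := by rw [map_mul]
    _ = linForm F b₀ b₁ * aeval ![u', v'] q := by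
        rw [aeval_X]
        rfl

lemma fiber_ne_zero {f g : MvPolynomial (Fin 2) F}
    (hsep : wronskian2 F f g ≠ 0) {u v : F} (huv : (u, v) ≠ (0, 0)) :
    C v * f - C u * g ≠ 0 := by
  intro h
  have hvf : C v * f = C u * g := sub_eq_zero.mp h
  have d0 : C v * pderiv 0 f = C u * pderiv 0 g := by
    have := congrArg (pderiv 0) hvf
    rwa [pderiv_C_mul, pderiv_C_mul] at this
  have d1 : C v * pderiv 1 f = C u * pderiv 1 g := by
    have := congrArg (pderiv 1) hvf
    rwa [pderiv_C_mul, pderiv_C_mul] at this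
  have hv2 : (C v)^2 * wronskian2 F f g = 0 := by
    rw [wronskian2]
    linear_combination (C v * pderiv 1 g) * d0 - (C v * pderiv 0 g) * d1
  have hu2 : (C u)^2 * wronskian2 F f g = 0 := by
    rw [wronskian2]
    linear_combination (C u * pderiv 1 f) * d0 - (C u * pderiv 0 f) * d1
  have hv0 : v = 0 := by
    rcases mul_eq_zero.mp hv2 with h' | h'
    · have h'' : (C v : MvPolynomial (Fin 2) F) = 0 :=
        pow_eq_zero_iff (two_ne_zero) |>.mp h'
      exact C_eq_zero.mp h''
    · exact absurd h' hsep
  have hu0 : u = 0 := by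
    rcases mul_eq_zero.mp hu2 with h' | h'
    · have h'' : (C u : MvPolynomial (Fin 2) F) = 0 :=
        pow_eq_zero_iff (two_ne_zero) |>.mp h'
      exact C_eq_zero.mp h''
    · exact absurd h' hsep
  exact huv (by rw [hu0, hv0])

end DPAux

open DPAux

theorem stmt4 (F : Type) [Field F] [IsAlgClosed F] (d : ℕ) (hd : 2 ≤ d)
    (f g : MvPolynomial (Fin 2) F)
    (hf : f.IsHomogeneous d) (hg : g.IsHomogeneous d)
    (hmor : ∀ a b : F, (a, b) ≠ (0, 0) → ¬ (eval ![a, b] f = 0 ∧ eval ![a, b] g = 0))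
    (hsep : wronskian2 F f g ≠ 0)
    (hsimp : IsSimplePair' F f g)
    (Δ : MvPolynomial (Fin 4) F)
    (hΔ : (X 0 * X 3 - X 1 * X 2) * Δ =
      aeval ![X 0, X 1] f * aeval ![X 2, X 3] g - aeval ![X 2, X 3] f * aeval ![X 0, X 1] g) :
    ∀ a₀ a₁ b₀ b₁ : F, (a₀, a₁) ≠ (0, 0) → (b₀, b₁) ≠ (0, 0) →
      eval ![a₀, a₁, b₀, b₁] Δ = 0 →
      ((linForm F b₀ b₁ ∣ aeval ![C a₀, C a₁, X 0, X 1] Δ ∧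
          ¬ (linForm F b₀ b₁) ^ 2 ∣ aeval ![C a₀, C a₁, X 0, X 1] Δ) ∨
       (linForm F a₀ a₁ ∣ aeval ![X 0, X 1, C b₀, C b₁] Δ ∧
          ¬ (linForm F a₀ a₁) ^ 2 ∣ aeval ![X 0, X 1, C b₀, C b₁] Δ)) := by
  intro a₀ a₁ b₀ b₁ ha hb h0
  set fa := eval ![a₀, a₁] f with hfa_def
  set ga := eval ![a₀, a₁] g with hga_def
  set fb := eval ![b₀, b₁] f with hfb_def
  set gb := eval ![b₀, b₁] g with hgb_def
  set La := linForm F a₀ a₁ with hLa_def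
  set Lb := linForm F b₀ b₁ with hLb_def
  set w : Fin 4 → MvPolynomial (Fin 2) F := ![C a₀, C a₁, X 0, X 1] with hw
  set w' : Fin 4 → MvPolynomial (Fin 2) F := ![X 0, X 1, C b₀, C b₁] with hw'
  set Δa := aeval w Δ with hΔa_def
  set Δb := aeval w' Δ with hΔb_def
  -- substitution identities
  have A1 : ∀ p : MvPolynomial (Fin 2) F,
      aeval w (aeval (![X 0, X 1] : Fin 2 → MvPolynomial (Fin 4) F) p) = C (eval ![a₀, a₁] p) := by
    intro p
    rw [aeval_comp_2]
    have : (fun i => aeval w ((![X 0, X 1] : Fin 2 → MvPolynomial (Fin 4) F) i))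
        = ![(C a₀ : MvPolynomial (Fin 2) F), C a₁] := by
      funext i
      fin_cases i <;> simp [hw]
    rw [this, aeval_C_pair]
  have A2 : ∀ p : MvPolynomial (Fin 2) F,
      aeval w (aeval (![X 2, X 3] : Fin 2 → MvPolynomial (Fin 4) F) p) = p := by
    intro p
    rw [aeval_comp_2]
    have : (fun i => aeval w ((![X 2, X 3] : Fin 2 → MvPolynomial (Fin 4) F) i))
        = (X : Fin 2 → MvPolynomial (Fin 2) F) := by
      funext i
      fin_cases i <;> simp [hw]
    rw [this, aeval_X_left_apply]
  have B1 : ∀ p : MvPolynomial (Fin 2) F,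
      aeval w' (aeval (![X 0, X 1] : Fin 2 → MvPolynomial (Fin 4) F) p) = p := by
    intro p
    rw [aeval_comp_2]
    have : (fun i => aeval w' ((![X 0, X 1] : Fin 2 → MvPolynomial (Fin 4) F) i))
        = (X : Fin 2 → MvPolynomial (Fin 2) F) := by
      funext i
      fin_cases i <;> simp [hw']
    rw [this, aeval_X_left_apply]
  have B2 : ∀ p : MvPolynomial (Fin 2) F,
      aeval w' (aeval (![X 2, X 3] : Fin 2 → MvPolynomial (Fin 4) F) p) = C (eval ![b₀, b₁] p) := by
    intro p
    rw [aeval_comp_2]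
    have : (fun i => aeval w' ((![X 2, X 3] : Fin 2 → MvPolynomial (Fin 4) F) i))
        = ![(C b₀ : MvPolynomial (Fin 2) F), C b₁] := by
      funext i
      fin_cases i <;> simp [hw']
    rw [this, aeval_C_pair]
  have hx0 : aeval (R := F) w (X (0 : Fin 4)) = C a₀ := by rw [aeval_X, hw]; simp
  have hx1 : aeval (R := F) w (X (1 : Fin 4)) = C a₁ := by rw [aeval_X, hw]; simp
  have hx2 : aeval (R := F) w (X (2 : Fin 4)) = X 0 := by rw [aeval_X, hw]; simp
  have hx3 : aeval (R := F) w (X (3 : Fin 4)) = X 1 := by rw [aeval_X, hw]; simp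
  have hy0 : aeval (R := F) w' (X (0 : Fin 4)) = X 0 := by rw [aeval_X, hw']; simp
  have hy1 : aeval (R := F) w' (X (1 : Fin 4)) = X 1 := by rw [aeval_X, hw']; simp
  have hy2 : aeval (R := F) w' (X (2 : Fin 4)) = C b₀ := by rw [aeval_X, hw']; simp
  have hy3 : aeval (R := F) w' (X (3 : Fin 4)) = C b₁ := by rw [aeval_X, hw']; simp
  have key1 : La * Δa = C ga * f - C fa * g := by
    have h := congrArg (aeval (R := F) w) hΔ
    rw [map_mul, map_sub, map_sub, map_mul, map_mul, map_mul, map_mul] at h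
    rw [A1 f, A1 g, A2 f, A2 g, hx0, hx1, hx2, hx3, ← hΔa_def,
      ← hfa_def, ← hga_def] at h
    rw [hLa_def, linForm]
    linear_combination -h
  have key2 : Lb * Δb = C gb * f - C fb * g := by
    have h := congrArg (aeval (R := F) w') hΔ
    rw [map_mul, map_sub, map_sub, map_mul, map_mul, map_mul, map_mul] at h
    rw [B1 f, B1 g, B2 f, B2 g, hy0, hy1, hy2, hy3, ← hΔb_def,
      ← hfb_def, ← hgb_def] at h
    rw [hLb_def, linForm]
    linear_combination h
  -- evaluation identities
  have E1 : eval ![b₀, b₁] Δa = 0 := by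
    have h1 : eval ![b₀, b₁] Δa = eval (eval ![b₀, b₁] ∘ w) Δ := by
      rw [hΔa_def, aeval_def, algebraMap_eq, ← eval_assoc]
    have h2 : (eval ![b₀, b₁] ∘ w) = ![a₀, a₁, b₀, b₁] := by
      funext i
      fin_cases i <;> simp [hw]
    rw [h1, h2, h0]
  have E2 : eval ![a₀, a₁] Δb = 0 := by
    have h1 : eval ![a₀, a₁] Δb = eval (eval ![a₀, a₁] ∘ w') Δ := by
      rw [hΔb_def, aeval_def, algebraMap_eq, ← eval_assoc]
    have h2 : (eval ![a₀, a₁] ∘ w') = ![a₀, a₁, b₀, b₁] := by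
      funext i
      fin_cases i <;> simp [hw']
    rw [h1, h2, h0]
  -- nonvanishing
  have hfa_ga : (fa, ga) ≠ (0, 0) := by
    intro hpair
    rw [Prod.mk.injEq] at hpair
    exact hmor a₀ a₁ ha ⟨hpair.1, hpair.2⟩
  have hfb_gb : (fb, gb) ≠ (0, 0) := by
    intro hpair
    rw [Prod.mk.injEq] at hpair
    exact hmor b₀ b₁ hb ⟨hpair.1, hpair.2⟩
  have hFa : C ga * f - C fa * g ≠ 0 := fiber_ne_zero hsep hfa_ga
  have hFb : C gb * f - C fb * g ≠ 0 := fiber_ne_zero hsep hfb_gb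
  have hLa0 : La ≠ 0 := linForm_ne_zero ha
  have hLb0 : Lb ≠ 0 := linForm_ne_zero hb
  have hFaH : (C ga * f - C fa * g).IsHomogeneous d := (hf.C_mul ga).sub (hg.C_mul fa)
  have hFbH : (C gb * f - C fb * g).IsHomogeneous d := (hf.C_mul gb).sub (hg.C_mul fb)
  have hΔaH : Δa.IsHomogeneous (d - 1) := by
    apply isHomog_of_mul (linForm_isHomog a₀ a₁) hLa0
    rw [show 1 + (d - 1) = d by omega]
    rw [key1]
    exact hFaH
  have hΔbH : Δb.IsHomogeneous (d - 1) := by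
    apply isHomog_of_mul (linForm_isHomog b₀ b₁) hLb0
    rw [show 1 + (d - 1) = d by omega]
    rw [key2]
    exact hFbH
  have hLbΔa : Lb ∣ Δa := root_dvd hΔaH hb E1
  have hLaΔb : La ∣ Δb := root_dvd hΔbH ha E2
  by_cases hLb2Fa : Lb ^ 2 ∣ (C ga * f - C fa * g)
  · by_cases hP : a₀ * b₁ = b₀ * a₁
    · -- proportional points: left disjunct
      obtain ⟨l, hb0eq, hb1eq⟩ : ∃ l : F, b₀ = l * a₀ ∧ b₁ = l * a₁ := by
        rcases (show a₀ ≠ 0 ∨ a₁ ≠ 0 by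
          by_contra hc; push_neg at hc; exact ha (by rw [hc.1, hc.2])) with h | h
        · refine ⟨b₀ / a₀, by field_simp, ?_⟩
          field_simp
          linear_combination hP
        · refine ⟨b₁ / a₁, ?_, by field_simp⟩
          field_simp
          linear_combination -hP
      have hl0 : l ≠ 0 := by
        intro h
        exact hb (by rw [hb0eq, hb1eq, h, zero_mul, zero_mul])
      have hLbLa : Lb = C l * La := by
        rw [hLb_def, hLa_def, linForm, linForm, hb0eq, hb1eq, C_mul, C_mul]
        ring
      refine Or.inl ⟨hLbΔa, ?_⟩
      intro h2
      have hLa2 : La ^ 2 ∣ Δa := by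
        refine dvd_trans ⟨C l ^ 2, ?_⟩ h2
        rw [hLbLa]; ring
      obtain ⟨t, ht⟩ := hLa2
      have h3 : La ^ 3 ∣ C ga * f - C fa * g := ⟨t, by rw [← key1, ht]; ring⟩
      exact (hsimp fa ga hfa_ga).1 a₀ a₁ ha h3
    · -- non-proportional: right disjunct
      refine Or.inr ⟨hLaΔb, ?_⟩
      intro h2
      have hLbFa : Lb ∣ (C ga * f - C fa * g) :=
        dvd_trans (dvd_pow_self Lb two_ne_zero) hLb2Fa
      obtain ⟨q, hq⟩ := hLbFa
      have hLbb : eval ![b₀, b₁] Lb = 0 := by rw [hLb_def, eval_linForm]; ring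
      have hcross : ga * fb - fa * gb = 0 := by
        have h3 := congrArg (eval ![b₀, b₁]) hq
        simp only [map_sub, map_mul, eval_C] at h3
        rw [hLbb, zero_mul] at h3
        rw [← hfb_def, ← hgb_def] at h3
        linear_combination h3
      obtain ⟨mu, hmu0, hfbeq, hgbeq⟩ : ∃ m : F, m ≠ 0 ∧ fb = m * fa ∧ gb = m * ga := by
        by_cases hfa0 : fa = 0
        · have hga0 : ga ≠ 0 := by
            intro h; exact hfa_ga (by rw [hfa0, h])
          have hfb0 : fb = 0 := by
            have h4 : ga * fb = 0 := by linear_combination hcross + gb * hfa0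
            rcases mul_eq_zero.mp h4 with h | h
            · exact absurd h hga0
            · exact h
          have hgb0 : gb ≠ 0 := by
            intro h; exact hfb_gb (by rw [hfb0, h])
          exact ⟨gb / ga, div_ne_zero hgb0 hga0, by rw [hfb0, hfa0, mul_zero], by field_simp⟩
        · have hfb0 : fb ≠ 0 := by
            intro h
            have h4 : fa * gb = 0 := by linear_combination -hcross + ga * h
            rcases mul_eq_zero.mp h4 with h' | h'
            · exact hfa0 h'
            · exact hfb_gb (by rw [h, h'])
          refine ⟨fb / fa, div_ne_zero hfb0 hfa0, by field_simp, ?_⟩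
          field_simp
          linear_combination -hcross
      have hCmu : C mu⁻¹ * C mu = (1 : MvPolynomial (Fin 2) F) := by
        rw [← C_mul, inv_mul_cancel₀ hmu0, C_1]
      have hFbFa : C gb * f - C fb * g = C mu * (C ga * f - C fa * g) := by
        rw [hfbeq, hgbeq, C_mul, C_mul]
        ring
      have hLa2Fa : La ^ 2 ∣ (C ga * f - C fa * g) := by
        have h3 : La ^ 2 ∣ C gb * f - C fb * g := by
          rw [← key2]
          exact h2.mul_left Lb
        rw [hFbFa] at h3
        obtain ⟨t, ht⟩ := h3
        refine ⟨C mu⁻¹ * t, ?_⟩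
        linear_combination C mu⁻¹ * ht - (C ga * f - C fa * g) * hCmu
      have hba := (hsimp fa ga hfa_ga).2 b₀ b₁ a₀ a₁ hb ha hLb2Fa hLa2Fa
      exact hP hba.symm
  · -- simple in the fiber: left disjunct
    refine Or.inl ⟨hLbΔa, ?_⟩
    intro h2
    apply hLb2Fa
    rw [← key1]
    exact h2.mul_left La

end
end

section
/- Let F be a field and f, g ∈ F[x] univariate polynomials. Then there exists a unique polynomial Δ ∈ F[x, y] with (x − y)·Δ(x, y) = f(x)g(y) − f(y)g(x), and it satisfies Δ(x, x) = f′(x)g(x) − f(x)g′(x), where ′ denotes the formal derivative. -/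
open MvPolynomial

lemma pd_aux {F : Type} [Field F] (i j : Fin 2) (f : Polynomial F) :
    pderiv i (Polynomial.aeval (X j : MvPolynomial (Fin 2) F) f) =
      (if i = j then 1 else 0) * Polynomial.aeval (X j : MvPolynomial (Fin 2) F) (Polynomial.derivative f) := by
  induction f using Polynomial.induction_on with
  | C a => simp
  | add p q hp hq =>
      simp only [map_add, hp, hq]
      split <;> simp
  | monomial n a ih =>
      simp only [map_mul, Polynomial.aeval_C, Polynomial.aeval_X_pow, Polynomial.derivative_mul,
        Polynomial.derivative_C, Polynomial.derivative_X_pow, zero_mul, zero_add,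
        Polynomial.aeval_mul, map_pow, Polynomial.aeval_natCast]
      rw [Derivation.leibniz, Derivation.leibniz_pow]
      simp [pderiv_X, Pi.single_apply, algebraMap_eq]
      by_cases h : i = j
      · simp [h]
      · simp [h, Ne.symm h]

theorem stmt5 (F : Type) [Field F] (f g : Polynomial F) :
    (∃! Δ : MvPolynomial (Fin 2) F,
      (X 0 - X 1) * Δ =
        Polynomial.aeval (X 0 : MvPolynomial (Fin 2) F) f * Polynomial.aeval (X 1 : MvPolynomial (Fin 2) F) g
          - Polynomial.aeval (X 1 : MvPolynomial (Fin 2) F) f * Polynomial.aeval (X 0 : MvPolynomial (Fin 2) F) g) ∧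
    ∀ Δ : MvPolynomial (Fin 2) F,
      (X 0 - X 1) * Δ =
        Polynomial.aeval (X 0 : MvPolynomial (Fin 2) F) f * Polynomial.aeval (X 1 : MvPolynomial (Fin 2) F) g
          - Polynomial.aeval (X 1 : MvPolynomial (Fin 2) F) f * Polynomial.aeval (X 0 : MvPolynomial (Fin 2) F) g →
      aeval ![X 0, X 0] Δ =
        Polynomial.aeval (X 0 : MvPolynomial (Fin 2) F)
          (Polynomial.derivative f * g - f * Polynomial.derivative g) := by
  have hne : (X 0 - X 1 : MvPolynomial (Fin 2) F) ≠ 0 := by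
    intro h
    have := congrArg (aeval ![(1 : F), 0]) h
    simp at this
  constructor
  · -- existence & uniqueness
    have hdvd : (X 0 - X 1 : MvPolynomial (Fin 2) F) ∣
        Polynomial.aeval (X 0 : MvPolynomial (Fin 2) F) f * Polynomial.aeval (X 1 : MvPolynomial (Fin 2) F) g
          - Polynomial.aeval (X 1 : MvPolynomial (Fin 2) F) f * Polynomial.aeval (X 0 : MvPolynomial (Fin 2) F) g := by
      set H : Polynomial (MvPolynomial (Fin 2) F) :=
        f.map (algebraMap F _) * Polynomial.C (Polynomial.aeval (X 1 : MvPolynomial (Fin 2) F) g)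
          - Polynomial.C (Polynomial.aeval (X 1 : MvPolynomial (Fin 2) F) f) * g.map (algebraMap F _) with hH
      have h3 : ∀ (p : Polynomial F) (k : Fin 2),
          Polynomial.eval (X k : MvPolynomial (Fin 2) F) (p.map (algebraMap F _))
            = Polynomial.aeval (X k : MvPolynomial (Fin 2) F) p := fun p k => by
        rw [Polynomial.eval_map, Polynomial.aeval_def]
      have := Polynomial.sub_dvd_eval_sub (X 0 : MvPolynomial (Fin 2) F) (X 1) H
      simp only [hH, Polynomial.eval_sub, Polynomial.eval_mul, Polynomial.eval_C, h3] at this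
      simpa using this
    obtain ⟨Δ, hΔ⟩ := hdvd
    refine ⟨Δ, hΔ.symm, ?_⟩
    intro Δ' hΔ'
    exact mul_left_cancel₀ hne (hΔ'.trans hΔ)
  · intro Δ hΔ
    have h1 := congrArg (pderiv 1) hΔ
    rw [Derivation.leibniz] at h1
    simp only [map_sub, map_mul, pd_aux, smul_eq_mul] at h1
    norm_num at h1
    -- h1 should now say : -Δ + (X 0 - X 1) * pderiv 1 Δ = ...
    have h2 := congrArg (aeval ![(X 0 : MvPolynomial (Fin 2) F), X 0]) h1
    have hsub : ∀ (p : Polynomial F) (k : Fin 2),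
        aeval ![(X 0 : MvPolynomial (Fin 2) F), X 0] (Polynomial.aeval (X k : MvPolynomial (Fin 2) F) p)
          = Polynomial.aeval (X 0 : MvPolynomial (Fin 2) F) p := by
      intro p k
      rw [← Polynomial.aeval_algHom_apply]
      simp
      fin_cases k <;> simp
    simp only [map_sub, map_add, map_mul, map_neg, hsub, aeval_X] at h2
    simp [Matrix.cons_val_zero, Matrix.cons_val_one] at h2
    simp only [map_sub, map_mul]
    rw [aeval_eq_bind₁]
    linear_combination -h2
end
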